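/- Suppose k, ℓ : [0,T] → ℝ are differentiable with k_0 = ℓ_0 = 1, k satisfies the Riccati equation k'_t = -(μ + λ_t) k_t + λ_t k_t², and ℓ satisfies ℓ'_t = -(μ + λ_t) ℓ_t + λ_t ℓ_t² - h_t with h_t ≥ 0 continuous, where λ is continuous nonnegative and 0 ≤ k_t, ℓ_t ≤ 1. Then ℓ_t ≤ k_t for all t ∈ [0,T]. -/

import Mathlib

/-- ODE comparison: a perturbation of the Riccati equation by a
nonpositive forcing term `-h` (with `h ≥ 0` continuous) is dominated by the
Riccati solution. -/
theorem riccati_comparison_below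
    (T μ : ℝ) (hT : 0 ≤ T)
    (l : ℝ → ℝ) (hl : Continuous l) (hl0 : ∀ t, 0 ≤ l t)
    (h : ℝ → ℝ) (hh : Continuous h) (hh0 : ∀ t, 0 ≤ h t)
    (k L : ℝ → ℝ) (hk0 : k 0 = 1) (hL0 : L 0 = 1)
    (hk : ∀ t ∈ Set.Icc 0 T, HasDerivAt k (-(μ + l t) * k t + l t * (k t) ^ 2) t)
    (hL : ∀ t ∈ Set.Icc 0 T,
      HasDerivAt L (-(μ + l t) * L t + l t * (L t) ^ 2 - h t) t)
    (hkb : ∀ t ∈ Set.Icc 0 T, 0 ≤ k t ∧ k t ≤ 1)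
    (hLb : ∀ t ∈ Set.Icc 0 T, 0 ≤ L t ∧ L t ≤ 1) :
    ∀ t ∈ Set.Icc 0 T, L t ≤ k t := by
  -- bound for l on the compact interval
  obtain ⟨M, hM⟩ : ∃ M, ∀ t ∈ Set.Icc (0:ℝ) T, l t ≤ M := by
    obtain ⟨x, -, hx⟩ := (isCompact_Icc (a := (0:ℝ)) (b := T)).exists_isMaxOn
      (Set.nonempty_Icc.2 hT) (hl.continuousOn)
    exact ⟨l x, hx⟩
  have hM0 : 0 ≤ M := le_trans (hl0 0) (hM 0 ⟨le_refl 0, hT⟩)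
  set C : ℝ := 2 * M + |μ| + 1 with hC
  have hCpos : 0 < C := by positivity
  set d : ℝ → ℝ := fun t => L t - k t with hd
  have hd' : ∀ t ∈ Set.Icc 0 T,
      HasDerivAt d ((-(μ + l t) + l t * (L t + k t)) * d t - h t) t := by
    intro t ht
    have := (hL t ht).sub (hk t ht)
    refine this.congr_deriv ?_
    simp only [hd]
    ring
  set f : ℝ → ℝ := fun t => max (d t) 0 with hf
  have hdc : ContinuousOn d (Set.Icc 0 T) := fun t ht =>
    ((hd' t ht).continuousAt).continuousWithinAt
  have hfc : ContinuousOn f (Set.Icc 0 T) := hdc.sup continuousOn_const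
  have key : ∀ x ∈ Set.Icc (0:ℝ) T, f x ≤ gronwallBound 0 C 0 (x - 0) := by
    apply le_gronwallBound_of_liminf_deriv_right_le (f' := fun x => C * f x) hfc
    · -- liminf slope condition
      intro x hx r hr
      have hfx0 : 0 ≤ f x := le_max_right _ _
      have hr0 : 0 < r := lt_of_le_of_lt (by positivity) hr
      have hxIcc : x ∈ Set.Icc 0 T := Set.Ico_subset_Icc_self hx
      by_cases hdx : d x < 0
      · -- locally d < 0, so f is locally 0 and slopes are 0 < r
        have hcont : ContinuousAt d x := (hd' x hxIcc).continuousAt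
        have hev : ∀ᶠ z in nhds x, d z < 0 := hcont.eventually_lt_const hdx
        have hev' : ∀ᶠ z in nhdsWithin x (Set.Ioi x),
            (z - x)⁻¹ * (f z - f x) < r := by
          filter_upwards [nhdsWithin_le_nhds hev] with z hz
          have hfz : f z = 0 := max_eq_right hz.le
          have hfx : f x = 0 := max_eq_right hdx.le
          rw [hfz, hfx]
          simpa using hr0
        exact hev'.frequently
      · push_neg at hdx
        have hfxd : f x = d x := max_eq_left hdx
        -- derivative bound
        have hder := hd' x hxIcc
        have hcoef : -(μ + l x) + l x * (L x + k x) ≤ C := by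
          have h1 : l x ≤ M := hM x hxIcc
          have h2 : L x + k x ≤ 2 := by
            have := (hLb x hxIcc).2; have := (hkb x hxIcc).2; linarith
          have h3 : 0 ≤ l x := hl0 x
          have h4 : -μ ≤ |μ| := neg_le_abs μ
          nlinarith [mul_le_mul_of_nonneg_left h2 h3, mul_le_mul_of_nonneg_right h1 (by linarith : (0:ℝ) ≤ 2)]
        have hdlt : (-(μ + l x) + l x * (L x + k x)) * d x - h x < r := by
          have : (-(μ + l x) + l x * (L x + k x)) * d x ≤ C * d x :=
            mul_le_mul_of_nonneg_right hcoef hdx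
          have hh' := hh0 x
          rw [hfxd] at hr
          linarith
        -- slopes of d tend to the derivative
        have hslope : Filter.Tendsto (fun z => (z - x)⁻¹ * (d z - d x))
            (nhdsWithin x (Set.Ioi x))
            (nhds ((-(μ + l x) + l x * (L x + k x)) * d x - h x)) := by
          have := hasDerivAt_iff_tendsto_slope.1 hder
          have hle : nhdsWithin x (Set.Ioi x) ≤ nhdsWithin x {x}ᶜ := by
            apply nhdsWithin_mono
            intro z hz
            exact ne_of_gt hz
          refine Filter.Tendsto.congr (fun z => ?_) (this.mono_left hle)
          rw [slope_def_field, div_eq_inv_mul]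
        have hev : ∀ᶠ z in nhdsWithin x (Set.Ioi x),
            (z - x)⁻¹ * (d z - d x) < r :=
          hslope.eventually_lt_const hdlt
        have hev2 : ∀ᶠ z in nhdsWithin x (Set.Ioi x),
            (z - x)⁻¹ * (f z - f x) < r := by
          filter_upwards [hev, self_mem_nhdsWithin] with z hz hzx
          have hzx' : 0 < z - x := sub_pos.2 hzx
          have hmax : f z - f x ≤ max (d z - d x) 0 := by
            simp only [hf]
            rcases le_total (d z) 0 with h' | h'
            · rw [max_eq_right h', max_eq_left hdx]
              have : (0:ℝ) ≤ max (d z - d x) 0 := le_max_right _ _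
              linarith
            · rw [max_eq_left h', max_eq_left hdx]
              exact le_max_left _ _
          calc (z - x)⁻¹ * (f z - f x) ≤ (z - x)⁻¹ * max (d z - d x) 0 := by
                apply mul_le_mul_of_nonneg_left hmax (by positivity)
            _ = max ((z - x)⁻¹ * (d z - d x)) ((z - x)⁻¹ * 0) :=
                mul_max_of_nonneg _ _ (by positivity)
            _ < r := by
                rw [max_lt_iff]
                exact ⟨hz, by simpa using hr0⟩
        exact hev2.frequently
    · -- f 0 ≤ 0
      simp [hf, hd, hk0, hL0]
    · intro x hx
      simp
  intro t ht
  have := key t ht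
  rw [gronwallBound_ε0_δ0] at this
  have : max (d t) 0 ≤ 0 := this
  have := le_trans (le_max_left (d t) 0) this
  simpa [hd, sub_nonpos] using this
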